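/- In a residual graph R arising from a graph G in which the degree sum of adjacent vertices is at least 4, if u is a white leaf of R whose unique neighbor x is white, then x has degree at least 3 in R, and playing u decreases the total weight by at least 1 + 2 + 2·(deg(x) − 1) ≥ 5 when all neighbors of x other than u are blue leaves. -/

import Mathlib

open SimpleGraph Finset

inductive GameColor | white | green | blue | red
deriving DecidableEq

def GameColor.weight : GameColor → ℕ
  | white => 3
  | green => 2
  | blue => 1
  | red => 0

variable {V : Type} [Fintype V] [DecidableEq V]

/-- The set of vertices totally dominated by the played set `D`. -/
def totDom (G : SimpleGraph V) [DecidableRel G.Adj] (D : Finset V) : Finset V :=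
  Finset.univ.filter fun u => ∃ v ∈ D, G.Adj u v

/-- A vertex `v` is a legal move if playing it totally dominates a new vertex. -/
def isLegal (G : SimpleGraph V) [DecidableRel G.Adj] (D : Finset V) (v : V) : Prop :=
  ∃ u, G.Adj v u ∧ u ∉ totDom G D

instance (G : SimpleGraph V) [DecidableRel G.Adj] (D : Finset V) :
    DecidablePred (isLegal G D) := fun v =>
  decidable_of_iff (∃ u, G.Adj v u ∧ u ∉ totDom G D) Iff.rfl

/-- The color of a vertex in the partially total dominated graph with played set `D`. -/
def colorOf (G : SimpleGraph V) [DecidableRel G.Adj] (D : Finset V) (v : V) : GameColor :=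
  if v ∈ totDom G D then
    (if isLegal G D v then .blue else .red)
  else (if v ∈ D then .green else .white)

/-- The total weight of the colored graph. -/
def totalWeight (G : SimpleGraph V) [DecidableRel G.Adj] (D : Finset V) : ℕ :=
  ∑ v, (colorOf G D v).weight

/-- The residualGraph graph: delete red vertices and blue–blue edges. -/
def residualGraph (G : SimpleGraph V) [DecidableRel G.Adj] (D : Finset V) : SimpleGraph V where
  Adj u w := G.Adj u w ∧ colorOf G D u ≠ .red ∧ colorOf G D w ≠ .red ∧
      ¬(colorOf G D u = .blue ∧ colorOf G D w = .blue)
  symm := ⟨fun u w ⟨h, a, b, c⟩ => ⟨h.symm, b, a, fun ⟨x, y⟩ => c ⟨y, x⟩⟩⟩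
  loopless := ⟨fun u ⟨h, _⟩ => G.loopless.irrefl u h⟩

instance (G : SimpleGraph V) [DecidableRel G.Adj] (D : Finset V) :
    DecidableRel (residualGraph G D).Adj := fun u w =>
  decidable_of_iff (G.Adj u w ∧ colorOf G D u ≠ .red ∧ colorOf G D w ≠ .red ∧
      ¬(colorOf G D u = .blue ∧ colorOf G D w = .blue)) Iff.rfl

def legalMoves (G : SimpleGraph V) [DecidableRel G.Adj] (D : Finset V) : Finset V :=
  Finset.univ.filter (isLegal G D)

/-- The value of the total domination game from position `D` with `fuel` moves allowed,
where `isDom = true` when it is Dominator's turn (Dominator minimizes, Staller maximizes).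
Since each legal move totally dominates a new vertex, fuel `Fintype.card V` always suffices. -/
def gameVal (G : SimpleGraph V) [DecidableRel G.Adj] : Bool → ℕ → Finset V → ℕ
  | _, 0, _ => 0
  | isDom, n + 1, D =>
    if h : (legalMoves G D).Nonempty then
      if isDom then 1 + (legalMoves G D).inf' h fun v => gameVal G false n (insert v D)
      else 1 + (legalMoves G D).sup' h fun v => gameVal G true n (insert v D)
    else 0

/-- The game total domination number `γ_tg(G)`: Dominator starts, both play optimally. -/
def gtd (G : SimpleGraph V) [DecidableRel G.Adj] : ℕ :=
  gameVal G true (Fintype.card V) ∅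

section Helpers

variable (G : SimpleGraph V) [DecidableRel G.Adj] (D : Finset V)

lemma mem_totDom_iff {v : V} : v ∈ totDom G D ↔ ∃ w ∈ D, G.Adj v w := by
  simp [totDom]

lemma colorOf_white_iff {v : V} :
    colorOf G D v = .white ↔ v ∉ totDom G D ∧ v ∉ D := by
  unfold colorOf; split_ifs <;> simp_all

lemma colorOf_ne_red_of_not_mem {v : V} (h : v ∉ totDom G D) :
    colorOf G D v ≠ .red := by
  unfold colorOf; split_ifs <;> simp_all

lemma colorOf_ne_blue_of_not_mem {v : V} (h : v ∉ totDom G D) :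
    colorOf G D v ≠ .blue := by
  unfold colorOf; split_ifs <;> simp_all

lemma mem_totDom_of_blue {v : V} (h : colorOf G D v = .blue) :
    v ∈ totDom G D := by
  by_contra hc; exact colorOf_ne_blue_of_not_mem G D hc h

lemma not_isLegal_of_red {v : V} (h : colorOf G D v = .red) :
    ¬ isLegal G D v := by
  unfold colorOf at h; split_ifs at h <;> simp_all

lemma colorOf_red_of {v : V} (h1 : v ∈ totDom G D) (h2 : ¬ isLegal G D v) :
    colorOf G D v = .red := by
  unfold colorOf; split_ifs <;> simp_all

lemma weight_le_one_of_mem {v : V} (h : v ∈ totDom G D) :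
    (colorOf G D v).weight ≤ 1 := by
  unfold colorOf; split_ifs <;> simp_all [GameColor.weight]

lemma colorOf_green_of {v : V} (h1 : v ∉ totDom G D) (h2 : v ∈ D) :
    colorOf G D v = .green := by
  unfold colorOf; split_ifs <;> simp_all

lemma residual_adj_of_white {v w : V} (hv : colorOf G D v = .white)
    (hw : G.Adj v w) : (residualGraph G D).Adj v w := by
  obtain ⟨hvt, -⟩ := (colorOf_white_iff G D).1 hv
  refine ⟨hw, by simp [hv], ?_, ?_⟩
  · intro hred
    exact not_isLegal_of_red G D hred ⟨v, hw.symm, hvt⟩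
  · rintro ⟨h1, -⟩; simp [hv] at h1

lemma residual_neighborFinset_of_white {v : V} (hv : colorOf G D v = .white) :
    (residualGraph G D).neighborFinset v = G.neighborFinset v := by
  ext w
  simp only [mem_neighborFinset]
  exact ⟨fun h => h.1, residual_adj_of_white G D hv⟩

lemma residual_degree_of_white {v : V} (hv : colorOf G D v = .white) :
    (residualGraph G D).degree v = G.degree v := by
  unfold SimpleGraph.degree
  rw [residual_neighborFinset_of_white G D hv]

lemma totDom_mono {D D' : Finset V} (h : D ⊆ D') :
    totDom G D ⊆ totDom G D' := by
  intro v hv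
  rw [mem_totDom_iff] at hv ⊢
  obtain ⟨w, hw, ha⟩ := hv
  exact ⟨w, h hw, ha⟩

lemma weight_mono {D D' : Finset V} (hsub : D ⊆ D') (v : V) :
    (colorOf G D' v).weight ≤ (colorOf G D v).weight := by
  have hmono : v ∈ totDom G D → v ∈ totDom G D' := fun h => totDom_mono G hsub h
  have hleg : ¬ isLegal G D v → ¬ isLegal G D' v := by
    rintro hn ⟨w, hw, hwn⟩
    exact hn ⟨w, hw, fun hm => hwn (totDom_mono G hsub hm)⟩
  have hD : v ∈ D → v ∈ D' := fun h => hsub h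
  unfold colorOf
  split_ifs <;> simp_all [GameColor.weight]

end Helpers

/-- In a residual graph of a graph `G` in which adjacent degree sums are at
least 4, if `u` is a white leaf of the residual graph whose unique neighbor `x` is white,
then `x` has degree at least 3 in the residual graph, and, when all neighbors of `x` other
than `u` are blue leaves, playing `u` decreases the total weight by at least 5. -/
theorem stmt17 (G : SimpleGraph V) [DecidableRel G.Adj] (D : Finset V) (u x : V)
    (hdeg : ∀ a b, G.Adj a b → 4 ≤ G.degree a + G.degree b)
    (hu : colorOf G D u = .white) (huleaf : (residualGraph G D).degree u = 1)
    (hux : (residualGraph G D).Adj u x) (hx : colorOf G D x = .white) :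
    3 ≤ (residualGraph G D).degree x ∧
    ((∀ y, (residualGraph G D).Adj x y → y ≠ u →
        colorOf G D y = .blue ∧ (residualGraph G D).degree y = 1) →
      totalWeight G (insert u D) + 5 ≤ totalWeight G D) := by
  have hGux : G.Adj u x := hux.1
  have hdu : G.degree u = 1 := by rw [← residual_degree_of_white G D hu]; exact huleaf
  have hdx : 3 ≤ (residualGraph G D).degree x := by
    rw [residual_degree_of_white G D hx]
    have := hdeg u x hGux
    omega
  refine ⟨hdx, fun hblue => ?_⟩
  set D' := insert u D with hD'
  obtain ⟨hut, huD⟩ := (colorOf_white_iff G D).1 hu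
  obtain ⟨hxt, hxD⟩ := (colorOf_white_iff G D).1 hx
  -- x is dominated after playing u
  have hxD' : x ∈ totDom G D' := by
    rw [mem_totDom_iff]
    exact ⟨u, Finset.mem_insert_self u D, hGux.symm⟩
  -- u is not dominated after playing u
  have huD' : u ∉ totDom G D' := by
    rw [mem_totDom_iff]
    rintro ⟨w, hw, hadj⟩
    rcases Finset.mem_insert.1 hw with rfl | hw
    · exact G.loopless.irrefl _ hadj
    · exact hut ((mem_totDom_iff G D).2 ⟨w, hw, hadj⟩)
  have hu' : colorOf G D' u = .green :=
    colorOf_green_of G D' huD' (Finset.mem_insert_self u D)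
  -- the set of blue leaf neighbors of x
  set S : Finset V := ((residualGraph G D).neighborFinset x).erase u with hS
  have hxu : x ≠ u := (hGux.symm).ne
  have hxnS : x ∉ S := fun h =>
    (residualGraph G D).irrefl ((mem_neighborFinset _ _ _).1 (Finset.mem_of_mem_erase h))
  have hunS : u ∉ S := fun h => (Finset.ne_of_mem_erase h) rfl
  have hScard : 2 ≤ S.card := by
    have h1 : u ∈ (residualGraph G D).neighborFinset x := (mem_neighborFinset _ _ _).2 hux.symm
    have h2 : S.card = ((residualGraph G D).neighborFinset x).card - 1 := by
      rw [hS]; exact Finset.card_erase_of_mem h1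
    have h4 : 1 ≤ ((residualGraph G D).neighborFinset x).card := Finset.card_pos.2 ⟨u, h1⟩
    have h3 : ((residualGraph G D).neighborFinset x).card = (residualGraph G D).degree x := rfl
    omega
  have hSmem : ∀ y ∈ S, (residualGraph G D).Adj x y ∧ y ≠ u := fun y hy =>
    ⟨(mem_neighborFinset _ _ _).1 (Finset.mem_of_mem_erase hy), Finset.ne_of_mem_erase hy⟩
  -- every y in S becomes red
  have hSred : ∀ y ∈ S, colorOf G D' y = .red := by
    intro y hy
    obtain ⟨hadj, hyu⟩ := hSmem y hy
    obtain ⟨hyblue, hyleaf⟩ := hblue y hadj hyu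
    refine colorOf_red_of G D' (totDom_mono G (Finset.subset_insert u D)
      (mem_totDom_of_blue G D hyblue)) ?_
    rintro ⟨w, hw, hwn⟩
    -- w is a residual neighbor of y
    have hwt : w ∉ totDom G D := fun h => hwn (totDom_mono G (Finset.subset_insert u D) h)
    have hres : (residualGraph G D).Adj y w := by
      refine ⟨hw, by simp [hyblue], colorOf_ne_red_of_not_mem G D hwt, ?_⟩
      rintro ⟨-, h2⟩
      exact colorOf_ne_blue_of_not_mem G D hwt h2
    -- residual neighborhood of y is {x}
    have hcard : ((residualGraph G D).neighborFinset y).card = 1 := hyleaf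
    obtain ⟨a, ha⟩ := Finset.card_eq_one.1 hcard
    have hxa : x ∈ ({a} : Finset V) := ha ▸ (mem_neighborFinset _ _ _).2 hadj.symm
    have hwa : w ∈ ({a} : Finset V) := ha ▸ (mem_neighborFinset _ _ _).2 hres
    have : w = x := by
      rw [Finset.mem_singleton] at hxa hwa; rw [hwa, hxa]
    exact hwn (this ▸ hxD')
  -- sum decomposition
  set T : Finset V := insert u (insert x S) with hT
  have hTsub : T ⊆ Finset.univ := Finset.subset_univ T
  have hsplit : ∀ (E : Finset V) [DecidablePred (isLegal G E)],
      totalWeight G E = ∑ v ∈ Finset.univ \ T, (colorOf G E v).weight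
        + ∑ v ∈ T, (colorOf G E v).weight := by
    intro E _
    rw [totalWeight, ← Finset.sum_sdiff hTsub]
  have hrest : ∑ v ∈ Finset.univ \ T, (colorOf G D' v).weight
      ≤ ∑ v ∈ Finset.univ \ T, (colorOf G D v).weight :=
    Finset.sum_le_sum fun v _ => weight_mono G (Finset.subset_insert u D) v
  have huT : u ∉ insert x S := by
    simp only [Finset.mem_insert]
    rintro (rfl | h)
    · exact hxu rfl
    · exact hunS h
  have hsumT : ∀ (E : Finset V) [DecidablePred (isLegal G E)],
      ∑ v ∈ T, (colorOf G E v).weight = (colorOf G E u).weight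
        + ((colorOf G E x).weight + ∑ v ∈ S, (colorOf G E v).weight) := by
    intro E _
    rw [hT, Finset.sum_insert huT, Finset.sum_insert hxnS]
  have hSold : ∑ v ∈ S, (colorOf G D v).weight = S.card := by
    rw [Finset.sum_congr rfl fun y hy => by rw [(hblue y (hSmem y hy).1 (hSmem y hy).2).1]]
    simp [GameColor.weight]
  have hSnew : ∑ v ∈ S, (colorOf G D' v).weight = 0 := by
    rw [Finset.sum_congr rfl fun y hy => by rw [hSred y hy]]
    simp [GameColor.weight]
  have hxw' : (colorOf G D' x).weight ≤ 1 := weight_le_one_of_mem G D' hxD'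
  have h1 := hsplit D
  have h2 := hsplit D'
  have h3 := hsumT D
  have h4 := hsumT D'
  rw [hu, hx] at h3
  rw [hu'] at h4
  rw [hSold] at h3
  rw [hSnew] at h4
  rw [show (GameColor.white).weight = 3 from rfl] at h3
  rw [show (GameColor.green).weight = 2 from rfl] at h4
  omega
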